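/- Let f(x) = x^n + a_{n-2} x^{n-2} + ... + a_1 x ∈ F_q[x] be a permutation polynomial of F_q in normalised form (monic, zero constant term, zero coefficient of x^{n-1}), where 3 ≤ n ≤ q-2 and q ≡ -1 (mod n). Then a_{n-2} = 0. -/

import Mathlib

open Polynomial Finset

lemma sum_pow_card_sub_one {F : Type*} [Field F] [Fintype F] :
    ∑ x : F, x ^ (Fintype.card F - 1) = -1 := by
  classical
  have h2 : 1 < Fintype.card F := Fintype.one_lt_card
  let φ : Fˣ ↪ F := ⟨fun x ↦ x, fun _ _ => Units.ext⟩
  have hmap : univ.map φ = univ \ {0} := by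
    ext x
    simpa only [mem_map, mem_univ, Function.Embedding.coeFn_mk, true_and, mem_sdiff,
      mem_singleton, φ] using (show (∃ a : Fˣ, φ a = x) ↔ ¬x = 0 from isUnit_iff_ne_zero)
  calc
    ∑ x : F, x ^ (Fintype.card F - 1)
        = ∑ x ∈ univ \ {(0 : F)}, x ^ (Fintype.card F - 1) := by
      rw [← Finset.sum_sdiff ({0} : Finset F).subset_univ, Finset.sum_singleton,
        zero_pow (by omega), add_zero]
    _ = ∑ x : Fˣ, ((x : F) ^ (Fintype.card F - 1) : F) := by
      simp [φ, ← hmap, univ.sum_map φ]; rfl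
    _ = -1 := by
      rw [FiniteField.sum_pow_units F (Fintype.card F - 1), if_pos dvd_rfl]

lemma sum_pow_eq_zero {F : Type*} [Field F] [Fintype F] (hq4 : 4 ≤ Fintype.card F) (i : ℕ)
    (hle : i ≤ Fintype.card F + 1) (hne : i ≠ Fintype.card F - 1) :
    ∑ x : F, x ^ i = 0 := by
  have h2 : 1 < Fintype.card F := Fintype.one_lt_card
  rcases lt_or_ge i (Fintype.card F - 1) with h | h
  · exact FiniteField.sum_pow_lt_card_sub_one F i h
  · -- i = q or q + 1
    have hi : i = Fintype.card F ∨ i = Fintype.card F + 1 := by omega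
    rcases hi with rfl | rfl
    · have : ∀ x : F, x ^ Fintype.card F = x ^ 1 := by
        intro x; rw [FiniteField.pow_card, pow_one]
      simp_rw [this]
      exact FiniteField.sum_pow_lt_card_sub_one F 1 (by omega)
    · have : ∀ x : F, x ^ (Fintype.card F + 1) = x ^ 2 := by
        intro x; rw [pow_succ, FiniteField.pow_card, sq]
      simp_rw [this]
      exact FiniteField.sum_pow_lt_card_sub_one F 2 (by omega)

theorem third_highest_coeff_zero {F : Type*} [Field F] [Fintype F]
    (n : ℕ) (hn3 : 3 ≤ n) (hnq : n ≤ Fintype.card F - 2)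
    (hmod : Fintype.card F % n = n - 1)
    (f : F[X]) (hmonic : f.Monic) (hdeg : f.natDegree = n)
    (h0 : f.coeff 0 = 0) (h1 : f.coeff (n - 1) = 0)
    (hf : Function.Bijective (fun c : F => f.eval c)) :
    f.coeff (n - 2) = 0 := by
  classical
  set q := Fintype.card F with hq
  have h2 : 1 < q := Fintype.one_lt_card
  have hq5 : 5 ≤ q := by omega
  have hqmod := Nat.div_add_mod q n
  set k := (q + 1) / n with hkdef
  have hnk : n * k = q + 1 := by
    have : n ∣ q + 1 := by
      refine ⟨q / n + 1, ?_⟩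
      rw [Nat.mul_add, mul_one]
      omega
    exact Nat.mul_div_cancel' this
  have hk2 : 2 ≤ k := by
    by_contra h
    have hle : n * k ≤ n * 1 := Nat.mul_le_mul_left n (by omega)
    rw [mul_one, hnk] at hle
    omega
  have hklt : k < q - 1 := by
    have h3k : 3 * k ≤ n * k := Nat.mul_le_mul_right k hn3
    rw [hnk] at h3k
    omega
  -- the polynomial g = f - X^n has small degree
  set g : F[X] := f - X ^ n with hgdef
  have hgdeg : g.natDegree ≤ n - 2 := by
    rw [natDegree_le_iff_coeff_eq_zero]
    intro i hi
    rw [hgdef, coeff_sub, coeff_X_pow]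
    rcases lt_trichotomy i n with h | h | h
    · rw [if_neg (by omega), sub_zero, (by omega : i = n - 1), h1]
    · rw [if_pos h, h, ← hdeg, hmonic.coeff_natDegree, sub_self]
    · rw [if_neg (by omega), sub_zero]
      exact coeff_eq_zero_of_natDegree_lt (by omega)
  have hgc : g.coeff (n - 2) = f.coeff (n - 2) := by
    rw [hgdef, coeff_sub, coeff_X_pow, if_neg (by omega), sub_zero]
  have hfg : f = X ^ n + g := by rw [hgdef]; ring
  -- coefficient of X^(q-1) in f^k
  have hcoeff : (f ^ k).coeff (q - 1) = f.coeff (n - 2) * k := by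
    rw [hfg, add_pow]
    rw [finset_sum_coeff]
    rw [Finset.sum_eq_single (k - 1)]
    · have h1' : (X ^ n : F[X]) ^ (k - 1) = X ^ (n * (k - 1)) := by rw [← pow_mul]
      have h2' : k - (k - 1) = 1 := by omega
      rw [h1', h2', pow_one]
      have hsplit : q - 1 = (n - 2) + n * (k - 1) := by
        have e : n * (k - 1) + n = n * k := by
          rw [← Nat.mul_succ]
          congr 1
          omega
        omega
      rw [hsplit, coeff_mul_natCast, coeff_X_pow_mul, hgdef, coeff_sub, coeff_X_pow,
        if_neg (by omega), sub_zero, Nat.choose_symm (by omega : 1 ≤ k), Nat.choose_one_right]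
      simp
    · intro j hj hjne
      rcases Nat.lt_or_ge j (k - 1) with hjlt | hjge
      · apply coeff_eq_zero_of_natDegree_lt
        have a1 : ((X ^ n : F[X]) ^ j).natDegree = n * j := by
          rw [← pow_mul, natDegree_X_pow]
        have a2 : (g ^ (k - j)).natDegree ≤ (k - j) * (n - 2) :=
          natDegree_pow_le.trans (Nat.mul_le_mul_left _ hgdeg)
        calc ((X ^ n : F[X]) ^ j * g ^ (k - j) * (k.choose j : F[X])).natDegree
            ≤ ((X ^ n : F[X]) ^ j * g ^ (k - j)).natDegree + (k.choose j : F[X]).natDegree :=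
              natDegree_mul_le
          _ ≤ (((X ^ n : F[X]) ^ j).natDegree + (g ^ (k - j)).natDegree) + 0 :=
              Nat.add_le_add natDegree_mul_le (natDegree_natCast _).le
          _ ≤ n * j + (k - j) * (n - 2) + 0 := by
              rw [a1]
              exact Nat.add_le_add (Nat.add_le_add le_rfl a2) le_rfl
          _ < q - 1 := by
              have e1 : (k - j) * (n - 2) + (k - j) * 2 = (k - j) * n := by
                rw [← Nat.mul_add]
                congr 1
                omega
              have e2 : n * j + n * (k - j) = n * k := by
                rw [← Nat.mul_add]
                congr 1
                omega
              have e3 : (k - j) * n = n * (k - j) := Nat.mul_comm _ _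
              omega
      · have hjk : j = k := by
          rcases Finset.mem_range.mp hj with h'
          omega
        subst hjk
        simp only [Nat.sub_self, pow_zero, mul_one, Nat.choose_self, Nat.cast_one]
        rw [← pow_mul, coeff_X_pow]
        rw [if_neg (by omega)]
    · intro h
      exact absurd (Finset.mem_range.mpr (by omega)) h
  -- the power sum identity
  have hsum : ∑ c : F, (f.eval c) ^ k = 0 := by
    have := hf.sum_comp (fun x : F => x ^ k)
    rw [this]
    exact FiniteField.sum_pow_lt_card_sub_one F k hklt
  -- expand the sum via coefficients
  have hdegfk : (f ^ k).natDegree = q + 1 := by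
    rw [hmonic.natDegree_pow, hdeg, mul_comm, hnk]
  have hexpand : ∑ c : F, (f.eval c) ^ k = (f ^ k).coeff (q - 1) * (-1) := by
    have heval : ∀ c : F, (f.eval c) ^ k = ∑ i ∈ Finset.range (q + 2),
        (f ^ k).coeff i * c ^ i := by
      intro c
      rw [← eval_pow, eval_eq_sum_range' (by omega : (f ^ k).natDegree < q + 2)]
    simp_rw [heval]
    rw [Finset.sum_comm]
    rw [Finset.sum_eq_single (q - 1)]
    · rw [← Finset.mul_sum, sum_pow_card_sub_one]
    · intro i hi hine
      rw [← Finset.mul_sum, sum_pow_eq_zero (by omega) i (by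
        have := Finset.mem_range.mp hi; omega) hine, mul_zero]
    · intro h
      exact absurd (Finset.mem_range.mpr (by omega)) h
  rw [hsum, hcoeff] at hexpand
  -- conclude: (k : F) ≠ 0
  have hkcast : (n : F) * (k : F) = 1 := by
    have : ((n * k : ℕ) : F) = ((q + 1 : ℕ) : F) := by rw [hnk]
    push_cast at this
    rwa [FiniteField.cast_card_eq_zero, zero_add] at this
  have hkne : (k : F) ≠ 0 := by
    intro h
    rw [h, mul_zero] at hkcast
    exact one_ne_zero hkcast.symm
  have : f.coeff (n - 2) * (k : F) = 0 := by
    linear_combination hexpand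
  exact (mul_eq_zero.mp this).resolve_right hkne
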